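/- Gradient of the multilevel objective via Lagrange multipliers: under the setting of the previous statement, suppose additionally that the equilibrium states s^k⋆ depend differentiably on the parameters W = (θ¹,…,θ^{N−1}, ω¹,…,ω^{N−1}) and that (s⋆, λ⋆) satisfies both stationarity conditions of the Lagrangian. Then the total derivative of C(W) := ℓ(s^{N−1}⋆(W)) with respect to any parameter θ^k equals ∇²_{1,2}Ẽ^k(s^k⋆, θ^k, s^{k−1}⋆, ω^k) · λ⋆^k, and with respect to ω^k equals ∇²_{1,4}Ẽ^k(s^k⋆, θ^k, s^{k−1}⋆, ω^k) · λ⋆^k. -/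

import Mathlib

open scoped RealInnerProductSpace

noncomputable section

abbrev Euc (n : ℕ) := EuclideanSpace ℝ (Fin n)

section AuxLemmas
open InnerProductSpace
section
variable {X Y R Z : Type*}
  [NormedAddCommGroup X] [InnerProductSpace ℝ X] [CompleteSpace X]
  [NormedAddCommGroup Y] [NormedSpace ℝ Y]
  [NormedAddCommGroup R] [NormedSpace ℝ R]
  [NormedAddCommGroup Z] [NormedSpace ℝ Z]

/-- inner product with a gradient is the fderiv (unconditional). -/
lemma inner_gradient_eq (f : X → ℝ) (x v : X) :
    ⟪gradient f x, v⟫ = fderiv ℝ f x v := by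
  rw [gradient, toDual_symm_apply]

end

section
variable {X Y Z : Type*}
  [NormedAddCommGroup X] [NormedSpace ℝ X]
  [NormedAddCommGroup Y] [NormedSpace ℝ Y]
  [NormedAddCommGroup Z] [NormedSpace ℝ Z]

/-- partial fderiv in the first slot of a product. -/
lemma fderiv_partial_fst (G : X × Y → Z) {x₀ : X} {y₀ : Y}
    (hG : DifferentiableAt ℝ G (x₀, y₀)) :
    fderiv ℝ (fun s => G (s, y₀)) x₀ =
      (fderiv ℝ G (x₀, y₀)).comp (ContinuousLinearMap.inl ℝ X Y) := by
  have h1 : HasFDerivAt (fun s : X => (s, y₀)) (ContinuousLinearMap.inl ℝ X Y) x₀ :=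
    (hasFDerivAt_id x₀).prodMk (hasFDerivAt_const y₀ x₀)
  have := fderiv_comp (𝕜 := ℝ) x₀ (g := G) (f := fun s : X => (s, y₀)) hG
    h1.differentiableAt
  rw [h1.fderiv] at this
  exact this

lemma fderiv_partial_snd (G : X × Y → Z) {x₀ : X} {y₀ : Y}
    (hG : DifferentiableAt ℝ G (x₀, y₀)) :
    fderiv ℝ (fun y => G (x₀, y)) y₀ =
      (fderiv ℝ G (x₀, y₀)).comp (ContinuousLinearMap.inr ℝ X Y) := by
  have h1 : HasFDerivAt (fun y : Y => (x₀, y)) (ContinuousLinearMap.inr ℝ X Y) y₀ :=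
    (hasFDerivAt_const x₀ y₀).prodMk (hasFDerivAt_id y₀)
  have := fderiv_comp (𝕜 := ℝ) y₀ (g := G) (f := fun y : Y => (x₀, y)) hG
    h1.differentiableAt
  rw [h1.fderiv] at this
  exact this

end

section
variable {X Y R Z : Type*}
  [NormedAddCommGroup X] [InnerProductSpace ℝ X] [CompleteSpace X]
  [NormedAddCommGroup Y] [NormedSpace ℝ Y]
  [NormedAddCommGroup R] [NormedSpace ℝ R]
  [NormedAddCommGroup Z] [NormedSpace ℝ Z]

/-- the partial-gradient map of a C² function is C¹. -/
lemma contDiff_gmap (F : X × Y → ℝ) (hF : ContDiff ℝ 2 F) :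
    ContDiff ℝ 1 (fun t : X × Y => gradient (fun s => F (s, t.2)) t.1) := by
  have hdF : Differentiable ℝ F := hF.differentiable (by norm_num)
  have key : ∀ t : X × Y,
      gradient (fun s => F (s, t.2)) t.1 =
        (toDual ℝ X).symm ((fderiv ℝ F t).comp (ContinuousLinearMap.inl ℝ X Y)) := by
    intro t
    rw [gradient, fderiv_partial_fst F (by exact hdF _)]
  have hf' : ContDiff ℝ 1 (fun t => fderiv ℝ F t) := hF.fderiv_right (by norm_num)
  let e : StrongDual ℝ X ≃ₗᵢ[ℝ] X := (toDual ℝ X).symm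
  let Ψ : ((X × Y) →L[ℝ] ℝ) →L[ℝ] X :=
    (e.toContinuousLinearEquiv.toContinuousLinearMap).comp
      ((ContinuousLinearMap.compL ℝ X (X × Y) ℝ).flip (ContinuousLinearMap.inl ℝ X Y))
  have : (fun t : X × Y => gradient (fun s => F (s, t.2)) t.1) =
      fun t => Ψ (fderiv ℝ F t) := by
    funext t; rw [key t]; rfl
  rw [this]
  exact Ψ.contDiff.comp hf'

/-- self-adjointness of the Hessian (fderiv of the gradient) of a C² function. -/
lemma hess_symm (f : X → ℝ) (hf : ContDiff ℝ 2 f) (x v w : X) :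
    ⟪fderiv ℝ (gradient f) x v, w⟫ = ⟪v, fderiv ℝ (gradient f) x w⟫ := by
  have hdf : Differentiable ℝ f := hf.differentiable (by norm_num)
  have hf' : ContDiff ℝ 1 (fderiv ℝ f) := hf.fderiv_right (by norm_num)
  let e : StrongDual ℝ X ≃ₗᵢ[ℝ] X := (toDual ℝ X).symm
  have he : ∀ (φ : StrongDual ℝ X) (u : X), ⟪e φ, u⟫ = φ u := fun φ u =>
    toDual_symm_apply
  have hg : gradient f = (⇑e) ∘ (fderiv ℝ f) := rfl
  have hcomp : fderiv ℝ (gradient f) x =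
      (e : StrongDual ℝ X →L[ℝ] X).comp (fderiv ℝ (fderiv ℝ f) x) := by
    rw [hg, e.comp_fderiv]
  have hsymm : ∀ a b : X, fderiv ℝ (fderiv ℝ f) x a b = fderiv ℝ (fderiv ℝ f) x b a :=
    second_derivative_symmetric (fun y => (hdf y).hasFDerivAt)
      ((hf'.differentiable one_ne_zero x).hasFDerivAt)
  rw [hcomp]
  simp only [ContinuousLinearMap.coe_comp', Function.comp_apply,
    LinearIsometryEquiv.coe_coe'']
  rw [he]
  have h2 := he (fderiv ℝ (fderiv ℝ f) x w) v
  rw [real_inner_comm] at h2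
  rw [h2]
  exact hsymm v w

variable {P U O : Type*}
  [NormedAddCommGroup P] [NormedSpace ℝ P]
  [NormedAddCommGroup U] [NormedSpace ℝ U]
  [NormedAddCommGroup O] [NormedSpace ℝ O]

/-- Differentiating the stationarity identity along a curve of parameters. -/
lemma star_general (F : X × P × U × O → ℝ) (hF : ContDiff ℝ 2 F)
    (σs : R → X) (σp : R → P) (σu : R → U) (σo : R → O) (τ₀ : R)
    (Ds : R →L[ℝ] X) (Dp : R →L[ℝ] P) (Du : R →L[ℝ] U) (Do : R →L[ℝ] O)
    (hs : HasFDerivAt σs Ds τ₀) (hp : HasFDerivAt σp Dp τ₀)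
    (hu : HasFDerivAt σu Du τ₀) (ho : HasFDerivAt σo Do τ₀)
    (hzero : ∀ τ, gradient (fun s' => F (s', σp τ, σu τ, σo τ)) (σs τ) = 0) (v : R) :
    fderiv ℝ (fun s => gradient (fun s' => F (s', σp τ₀, σu τ₀, σo τ₀)) s) (σs τ₀) (Ds v)
    + fderiv ℝ (fun q => gradient (fun s' => F (s', q, σu τ₀, σo τ₀)) (σs τ₀)) (σp τ₀) (Dp v)
    + fderiv ℝ (fun u => gradient (fun s' => F (s', σp τ₀, u, σo τ₀)) (σs τ₀)) (σu τ₀) (Du v)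
    + fderiv ℝ (fun o => gradient (fun s' => F (s', σp τ₀, σu τ₀, o)) (σs τ₀)) (σo τ₀) (Do v)
    = 0 := by
  let G : X × P × U × O → X :=
    fun t => gradient (fun s' => F (s', t.2.1, t.2.2.1, t.2.2.2)) t.1
  have hG : ContDiff ℝ 1 G := contDiff_gmap (Y := P × U × O) F hF
  have hGd : Differentiable ℝ G := hG.differentiable one_ne_zero
  set base : X × P × U × O := (σs τ₀, σp τ₀, σu τ₀, σo τ₀) with hbase
  have hσ : HasFDerivAt (fun τ => ((σs τ, σp τ, σu τ, σo τ) : X × P × U × O))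
      (Ds.prod (Dp.prod (Du.prod Do))) τ₀ := hs.prodMk (hp.prodMk (hu.prodMk ho))
  have h0 : fderiv ℝ (fun τ => G (σs τ, σp τ, σu τ, σo τ)) τ₀ = 0 := by
    have hzz : (fun τ => G (σs τ, σp τ, σu τ, σo τ)) = fun _ => (0 : X) :=
      funext fun τ => hzero τ
    rw [hzz]; exact fderiv_const_apply 0
  have hchain : fderiv ℝ (fun τ => G (σs τ, σp τ, σu τ, σo τ)) τ₀ =
      (fderiv ℝ G base).comp (Ds.prod (Dp.prod (Du.prod Do))) := by
    have := fderiv_comp (𝕜 := ℝ) τ₀ (g := G)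
      (f := fun τ => ((σs τ, σp τ, σu τ, σo τ) : X × P × U × O))
      (hGd base) hσ.differentiableAt
    rw [hσ.fderiv] at this
    exact this
  have hD0 : (fderiv ℝ G base) (Ds v, Dp v, Du v, Do v) = 0 := by
    have h := congrArg (fun (L : R →L[ℝ] X) => L v) (hchain.symm.trans h0)
    simpa using h
  -- partial derivatives
  have t1 : fderiv ℝ (fun s => gradient (fun s' => F (s', σp τ₀, σu τ₀, σo τ₀)) s) (σs τ₀)
      = (fderiv ℝ G base).comp (ContinuousLinearMap.inl ℝ X (P × U × O)) :=
    fderiv_partial_fst (x₀ := σs τ₀) (y₀ := (σp τ₀, σu τ₀, σo τ₀)) G (hGd base)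
  have hH1d : DifferentiableAt ℝ (fun y : P × U × O => G (σs τ₀, y))
      (σp τ₀, σu τ₀, σo τ₀) :=
    by fun_prop
  have e2 : fderiv ℝ (fun y : P × U × O => G (σs τ₀, y)) (σp τ₀, σu τ₀, σo τ₀)
      = (fderiv ℝ G base).comp (ContinuousLinearMap.inr ℝ X (P × U × O)) :=
    fderiv_partial_snd (x₀ := σs τ₀) (y₀ := (σp τ₀, σu τ₀, σo τ₀)) G (hGd base)
  have t2 : fderiv ℝ (fun q => gradient (fun s' => F (s', q, σu τ₀, σo τ₀)) (σs τ₀)) (σp τ₀)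
      = ((fderiv ℝ G base).comp (ContinuousLinearMap.inr ℝ X (P × U × O))).comp
          (ContinuousLinearMap.inl ℝ P (U × O)) := by
    have := fderiv_partial_fst (x₀ := σp τ₀) (y₀ := (σu τ₀, σo τ₀))
      (fun y : P × U × O => G (σs τ₀, y)) hH1d
    rw [e2] at this
    exact this
  have hH2d : DifferentiableAt ℝ (fun z : U × O => G (σs τ₀, σp τ₀, z)) (σu τ₀, σo τ₀) :=
    by fun_prop
  have e3 : fderiv ℝ (fun z : U × O => G (σs τ₀, σp τ₀, z)) (σu τ₀, σo τ₀)
      = ((fderiv ℝ G base).comp (ContinuousLinearMap.inr ℝ X (P × U × O))).comp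
          (ContinuousLinearMap.inr ℝ P (U × O)) := by
    have := fderiv_partial_snd (x₀ := σp τ₀) (y₀ := (σu τ₀, σo τ₀))
      (fun y : P × U × O => G (σs τ₀, y)) hH1d
    rw [e2] at this
    exact this
  have t3 : fderiv ℝ (fun u => gradient (fun s' => F (s', σp τ₀, u, σo τ₀)) (σs τ₀)) (σu τ₀)
      = (((fderiv ℝ G base).comp (ContinuousLinearMap.inr ℝ X (P × U × O))).comp
          (ContinuousLinearMap.inr ℝ P (U × O))).comp
          (ContinuousLinearMap.inl ℝ U O) := by
    have := fderiv_partial_fst (x₀ := σu τ₀) (y₀ := σo τ₀)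
      (fun z : U × O => G (σs τ₀, σp τ₀, z)) hH2d
    rw [e3] at this
    exact this
  have t4 : fderiv ℝ (fun o => gradient (fun s' => F (s', σp τ₀, σu τ₀, o)) (σs τ₀)) (σo τ₀)
      = (((fderiv ℝ G base).comp (ContinuousLinearMap.inr ℝ X (P × U × O))).comp
          (ContinuousLinearMap.inr ℝ P (U × O))).comp
          (ContinuousLinearMap.inr ℝ U O) := by
    have := fderiv_partial_snd (x₀ := σu τ₀) (y₀ := σo τ₀)
      (fun z : U × O => G (σs τ₀, σp τ₀, z)) hH2d
    rw [e3] at this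
    exact this
  rw [t1, t2, t3, t4]
  simp only [ContinuousLinearMap.comp_apply, ContinuousLinearMap.inl_apply,
    ContinuousLinearMap.inr_apply]
  rw [← map_add, ← map_add, ← map_add]
  simp only [Prod.mk_add_mk, add_zero, zero_add]
  exact hD0
end

/-- scalar bookkeeping for the adjoint (backward) recursion. -/
lemma scalar_chain (N k₀ : ℕ) (hk₁ : 1 ≤ k₀) (hk₂ : k₀ ≤ N-1) (hN : 2 ≤ N)
    (a b : ℕ → ℝ) (p c : ℝ)
    (hstar : ∀ j, 1 ≤ j → j ≤ N-1 → a j + b j + (if j = k₀ then p else 0) = 0)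
    (hrec : ∀ j, 1 ≤ j → j ≤ N-2 → b (j+1) = - a j)
    (htop : c = - a (N-1))
    (hb1 : b 1 = 0) : c = p := by
  have key : ∀ t j, j + t = N-1 → 1 ≤ j → c = - a j + (if j < k₀ then p else 0) := by
    intro t
    induction t with
    | zero =>
      intro j hj h1
      have hj' : j = N-1 := by omega
      subst hj'
      have : ¬ (N-1 < k₀) := by omega
      simp [this, htop]
    | succ t ih =>
      intro j hj h1
      have h2 := ih (j+1) (by omega) (by omega)
      have hs := hstar (j+1) (by omega) (by omega)
      have hr := hrec j h1 (by omega)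
      rw [hr] at hs
      -- hs : a (j+1) + (- a j) + (if j+1 = k₀ then p else 0) = 0
      rw [h2]
      by_cases hc : j + 1 = k₀
      · have hlt : j < k₀ := by omega
        have hlt' : ¬ (j + 1 < k₀) := by omega
        rw [if_pos hc] at hs
        rw [if_neg hlt', if_pos hlt]
        simp only [add_zero]
        have : a (j+1) = a j - p := by linarith
        rw [this]; ring
      · simp only [if_neg hc] at hs
        have : a (j+1) = a j := by linarith
        rw [this]
        by_cases hlt : j + 1 < k₀
        · have : j < k₀ := by omega
          simp [hlt, this]
        · have : ¬ (j < k₀) := by omega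
          simp [hlt, this]
  have h1 := key (N-2) 1 (by omega) le_rfl
  have hs := hstar 1 (by omega) (by omega)
  rw [hb1] at hs
  by_cases hc : 1 = k₀
  · have : ¬ (1 < k₀) := by omega
    rw [if_pos hc] at hs
    rw [if_neg this, add_zero] at h1
    have : a 1 = - p := by linarith
    rw [h1, this]; ring
  · have hlt : 1 < k₀ := by omega
    rw [if_neg hc, add_zero] at hs
    rw [if_pos hlt] at h1
    have : a 1 = 0 := by linarith
    rw [h1, this]; ring
end AuxLemmas

set_option maxHeartbeats 2000000 in
/-- Gradient of the multilevel objective via Lagrange multipliers: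
`d_{θ^k} C = ∇²_{1,2}Ẽ^k · λ⋆^k` and `d_{ω^k} C = ∇²_{1,4}Ẽ^k · λ⋆^k`, where
`C(W) = ℓ(s^{N−1}⋆(W))` and `(s⋆, λ⋆)` satisfies both stationarity conditions. -/
theorem stmt_10 (N : ℕ) (hN : 2 ≤ N) (n pd qd : ℕ → ℕ)
    (Et : (k : ℕ) → Euc (n k) → Euc (pd k) → Euc (n (k-1)) → Euc (qd k) → ℝ)
    (hEt : ∀ k, ContDiff ℝ 2
      (fun t : Euc (n k) × Euc (pd k) × Euc (n (k-1)) × Euc (qd k) =>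
        Et k t.1 t.2.1 t.2.2.1 t.2.2.2))
    (ℓ : Euc (n (N-1)) → ℝ) (hℓ : Differentiable ℝ ℓ)
    (θ : (k : ℕ) → Euc (pd k)) (ω : (k : ℕ) → Euc (qd k))
    (x : Euc (n 0))
    (k₀ : ℕ) (hk₁ : 1 ≤ k₀) (hk₂ : k₀ ≤ N-1)
    -- equilibrium states as a differentiable family of the parameter θ^{k₀}
    (sθ : (k : ℕ) → Euc (pd k₀) → Euc (n k))
    (hsθdiff : ∀ k, ContDiff ℝ 1 (sθ k))
    (hsθ0 : ∀ τ, sθ 0 τ = x)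
    (hsθeq : ∀ τ, ∀ k, 1 ≤ k → k ≤ N-1 →
      gradient (fun s' => Et k s' (Function.update θ k₀ τ k) (sθ (k-1) τ) (ω k))
        (sθ k τ) = 0)
    -- equilibrium states as a differentiable family of the parameter ω^{k₀}
    (sω : (k : ℕ) → Euc (qd k₀) → Euc (n k))
    (hsωdiff : ∀ k, ContDiff ℝ 1 (sω k))
    (hsω0 : ∀ τ, sω 0 τ = x)
    (hsωeq : ∀ τ, ∀ k, 1 ≤ k → k ≤ N-1 →
      gradient (fun s' => Et k s' (θ k) (sω (k-1) τ) (Function.update ω k₀ τ k))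
        (sω k τ) = 0)
    (hbase : ∀ k, sω k (ω k₀) = sθ k (θ k₀))
    -- the Lagrange multipliers at the base point: adjoint (KKT) recursion
    (lam : (k : ℕ) → Euc (n k))
    (hlamtop : gradient ℓ (sθ (N-1) (θ k₀)) +
      (fderiv ℝ (fun sk =>
          gradient (fun s' => Et (N-1) s' (θ (N-1)) (sθ (N-1-1) (θ k₀)) (ω (N-1))) sk)
        (sθ (N-1) (θ k₀))) (lam (N-1)) = 0)
    (hlamrec : ∀ k, 1 ≤ k → k ≤ N-2 →
      (ContinuousLinearMap.adjoint
        (fderiv ℝ (fun u : Euc (n k) =>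
            gradient (fun s' => Et (k+1) s' (θ (k+1)) u (ω (k+1))) (sθ (k+1) (θ k₀)))
          (sθ k (θ k₀)))) (lam (k+1)) +
      (fderiv ℝ (fun sk =>
          gradient (fun s' => Et k s' (θ k) (sθ (k-1) (θ k₀)) (ω k)) sk)
        (sθ k (θ k₀))) (lam k) = 0) :
    gradient (fun τ => ℓ (sθ (N-1) τ)) (θ k₀) =
      (ContinuousLinearMap.adjoint
        (fderiv ℝ (fun τ =>
            gradient (fun s' => Et k₀ s' τ (sθ (k₀-1) (θ k₀)) (ω k₀)) (sθ k₀ (θ k₀)))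
          (θ k₀))) (lam k₀) ∧
    gradient (fun τ => ℓ (sω (N-1) τ)) (ω k₀) =
      (ContinuousLinearMap.adjoint
        (fderiv ℝ (fun τ =>
            gradient (fun s' => Et k₀ s' (θ k₀) (sθ (k₀-1) (θ k₀)) τ) (sθ k₀ (θ k₀)))
          (ω k₀))) (lam k₀) := by
  have hDsθ : ∀ k, HasFDerivAt (sθ k) (fderiv ℝ (sθ k) (θ k₀)) (θ k₀) :=
    fun k => (((hsθdiff k).differentiable one_ne_zero) (θ k₀)).hasFDerivAt
  have hDsω : ∀ k, HasFDerivAt (sω k) (fderiv ℝ (sω k) (ω k₀)) (ω k₀) :=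
    fun k => (((hsωdiff k).differentiable one_ne_zero) (ω k₀)).hasFDerivAt
  have hC2 : ∀ k (u : Euc (n (k-1))),
      ContDiff ℝ 2 (fun s : Euc (n k) => Et k s (θ k) u (ω k)) :=
    fun k u => (hEt k).comp
      (contDiff_id.prodMk (contDiff_const.prodMk (contDiff_const.prodMk contDiff_const)))
  constructor
  · apply ext_inner_right ℝ
    intro v
    rw [ContinuousLinearMap.adjoint_inner_left]
    refine scalar_chain N k₀ hk₁ hk₂ hN
      (fun j => ⟪lam j, (fderiv ℝ
          (gradient (fun s' => Et j s' (θ j) (sθ (j-1) (θ k₀)) (ω j))) (sθ j (θ k₀)))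
          ((fderiv ℝ (sθ j) (θ k₀)) v)⟫)
      (fun j => ⟪lam j, (fderiv ℝ
          (fun u => gradient (fun s' => Et j s' (θ j) u (ω j)) (sθ j (θ k₀)))
          (sθ (j-1) (θ k₀))) ((fderiv ℝ (sθ (j-1)) (θ k₀)) v)⟫)
      _ _ ?_ ?_ ?_ ?_
    · -- hstar
      intro j h1 h2
      by_cases hc : j = k₀
      · subst hc
        have hp : HasFDerivAt (fun τ : Euc (pd j) => Function.update θ j τ j)
            (ContinuousLinearMap.id ℝ (Euc (pd j))) (θ j) := by
          simp only [Function.update_self]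
          exact hasFDerivAt_id _
        have hst := star_general (fun t => Et j t.1 t.2.1 t.2.2.1 t.2.2.2) (hEt j)
          (sθ j) (fun τ => Function.update θ j τ j) (sθ (j-1)) (fun _ => ω j) (θ j)
          _ _ _ 0 (hDsθ j) hp (hDsθ (j-1)) (hasFDerivAt_const _ _)
          (fun τ => hsθeq τ j h1 h2) v
        simp only [Function.update_eq_self, ContinuousLinearMap.coe_id', id_eq,
          ContinuousLinearMap.zero_apply, map_zero, add_zero] at hst
        have hin := congrArg (fun z => (inner ℝ (lam j) z : ℝ)) hst
        simp only [inner_add_right, inner_zero_right] at hin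
        rw [if_pos rfl]
        linarith
      · have hp : HasFDerivAt (fun τ : Euc (pd k₀) => Function.update θ k₀ τ j)
            (0 : Euc (pd k₀) →L[ℝ] Euc (pd j)) (θ k₀) := by
          simp only [Function.update_of_ne hc]
          exact hasFDerivAt_const _ _
        have hst := star_general (fun t => Et j t.1 t.2.1 t.2.2.1 t.2.2.2) (hEt j)
          (sθ j) (fun τ => Function.update θ k₀ τ j) (sθ (j-1)) (fun _ => ω j) (θ k₀)
          _ _ _ 0 (hDsθ j) hp (hDsθ (j-1)) (hasFDerivAt_const _ _)
          (fun τ => hsθeq τ j h1 h2) v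
        simp only [Function.update_eq_self, ContinuousLinearMap.zero_apply, map_zero,
          add_zero, zero_add] at hst
        have hin := congrArg (fun z => (inner ℝ (lam j) z : ℝ)) hst
        simp only [inner_add_right, inner_zero_right] at hin
        rw [if_neg hc, add_zero]
        linarith
    · -- hrec
      intro j h1 h2
      have hadj := eq_neg_of_add_eq_zero_left (hlamrec j h1 h2)
      show ⟪lam (j+1), (fderiv ℝ
          (fun u : Euc (n j) => gradient (fun s' => Et (j+1) s' (θ (j+1)) u (ω (j+1)))
            (sθ (j+1) (θ k₀))) (sθ j (θ k₀))) ((fderiv ℝ (sθ j) (θ k₀)) v)⟫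
        = -⟪lam j, (fderiv ℝ
          (gradient (fun s' => Et j s' (θ j) (sθ (j-1) (θ k₀)) (ω j))) (sθ j (θ k₀)))
          ((fderiv ℝ (sθ j) (θ k₀)) v)⟫
      rw [← ContinuousLinearMap.adjoint_inner_left]
      rw [hadj, inner_neg_left]
      exact congrArg Neg.neg (hess_symm _ (hC2 j _) _ (lam j) _)
    · -- htop
      have e1 := inner_gradient_eq (fun τ => ℓ (sθ (N-1) τ)) (θ k₀) v
      have hcomp : fderiv ℝ (fun τ => ℓ (sθ (N-1) τ)) (θ k₀)
          = (fderiv ℝ ℓ (sθ (N-1) (θ k₀))).comp (fderiv ℝ (sθ (N-1)) (θ k₀)) :=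
        fderiv_comp _ (hℓ _) (((hsθdiff (N-1)).differentiable one_ne_zero) _)
      rw [e1, hcomp]
      rw [show ((fderiv ℝ ℓ (sθ (N-1) (θ k₀))).comp (fderiv ℝ (sθ (N-1)) (θ k₀))) v
          = fderiv ℝ ℓ (sθ (N-1) (θ k₀)) ((fderiv ℝ (sθ (N-1)) (θ k₀)) v) from rfl]
      rw [← inner_gradient_eq ℓ (sθ (N-1) (θ k₀)) ((fderiv ℝ (sθ (N-1)) (θ k₀)) v)]
      rw [eq_neg_of_add_eq_zero_left hlamtop, inner_neg_left]
      exact congrArg Neg.neg (hess_symm _ (hC2 (N-1) _) _ (lam (N-1)) _)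
    · -- hb1
      show ⟪lam 1, (fderiv ℝ
          (fun u => gradient (fun s' => Et 1 s' (θ 1) u (ω 1)) (sθ 1 (θ k₀)))
          (sθ 0 (θ k₀))) ((fderiv ℝ (sθ 0) (θ k₀)) v)⟫ = 0
      rw [show sθ 0 = fun _ => x from funext hsθ0, fderiv_fun_const]
      simp
  · apply ext_inner_right ℝ
    intro v
    rw [ContinuousLinearMap.adjoint_inner_left]
    refine scalar_chain N k₀ hk₁ hk₂ hN
      (fun j => ⟪lam j, (fderiv ℝ
          (gradient (fun s' => Et j s' (θ j) (sθ (j-1) (θ k₀)) (ω j))) (sθ j (θ k₀)))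
          ((fderiv ℝ (sω j) (ω k₀)) v)⟫)
      (fun j => ⟪lam j, (fderiv ℝ
          (fun u => gradient (fun s' => Et j s' (θ j) u (ω j)) (sθ j (θ k₀)))
          (sθ (j-1) (θ k₀))) ((fderiv ℝ (sω (j-1)) (ω k₀)) v)⟫)
      _ _ ?_ ?_ ?_ ?_
    · intro j h1 h2
      by_cases hc : j = k₀
      · subst hc
        have ho : HasFDerivAt (fun τ : Euc (qd j) => Function.update ω j τ j)
            (ContinuousLinearMap.id ℝ (Euc (qd j))) (ω j) := by
          simp only [Function.update_self]
          exact hasFDerivAt_id _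
        have hst := star_general (fun t => Et j t.1 t.2.1 t.2.2.1 t.2.2.2) (hEt j)
          (sω j) (fun _ => θ j) (sω (j-1)) (fun τ => Function.update ω j τ j) (ω j)
          _ 0 _ _ (hDsω j) (hasFDerivAt_const _ _) (hDsω (j-1)) ho
          (fun τ => hsωeq τ j h1 h2) v
        simp only [Function.update_eq_self, hbase, ContinuousLinearMap.coe_id', id_eq,
          ContinuousLinearMap.zero_apply, map_zero, add_zero, zero_add] at hst
        have hin := congrArg (fun z => (inner ℝ (lam j) z : ℝ)) hst
        simp only [inner_add_right, inner_zero_right] at hin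
        rw [if_pos rfl]
        linarith
      · have ho : HasFDerivAt (fun τ : Euc (qd k₀) => Function.update ω k₀ τ j)
            (0 : Euc (qd k₀) →L[ℝ] Euc (qd j)) (ω k₀) := by
          simp only [Function.update_of_ne hc]
          exact hasFDerivAt_const _ _
        have hst := star_general (fun t => Et j t.1 t.2.1 t.2.2.1 t.2.2.2) (hEt j)
          (sω j) (fun _ => θ j) (sω (j-1)) (fun τ => Function.update ω k₀ τ j) (ω k₀)
          _ 0 _ _ (hDsω j) (hasFDerivAt_const _ _) (hDsω (j-1)) ho
          (fun τ => hsωeq τ j h1 h2) v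
        simp only [Function.update_eq_self, hbase, ContinuousLinearMap.zero_apply,
          map_zero, add_zero, zero_add] at hst
        have hin := congrArg (fun z => (inner ℝ (lam j) z : ℝ)) hst
        simp only [inner_add_right, inner_zero_right] at hin
        rw [if_neg hc, add_zero]
        linarith
    · intro j h1 h2
      have hadj := eq_neg_of_add_eq_zero_left (hlamrec j h1 h2)
      show ⟪lam (j+1), (fderiv ℝ
          (fun u : Euc (n j) => gradient (fun s' => Et (j+1) s' (θ (j+1)) u (ω (j+1)))
            (sθ (j+1) (θ k₀))) (sθ j (θ k₀))) ((fderiv ℝ (sω j) (ω k₀)) v)⟫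
        = -⟪lam j, (fderiv ℝ
          (gradient (fun s' => Et j s' (θ j) (sθ (j-1) (θ k₀)) (ω j))) (sθ j (θ k₀)))
          ((fderiv ℝ (sω j) (ω k₀)) v)⟫
      rw [← ContinuousLinearMap.adjoint_inner_left]
      rw [hadj, inner_neg_left]
      exact congrArg Neg.neg (hess_symm _ (hC2 j _) _ (lam j) _)
    · have e1 := inner_gradient_eq (fun τ => ℓ (sω (N-1) τ)) (ω k₀) v
      have hcomp : fderiv ℝ (fun τ => ℓ (sω (N-1) τ)) (ω k₀)
          = (fderiv ℝ ℓ (sω (N-1) (ω k₀))).comp (fderiv ℝ (sω (N-1)) (ω k₀)) :=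
        fderiv_comp _ (hℓ _) (((hsωdiff (N-1)).differentiable one_ne_zero) _)
      rw [e1, hcomp]
      rw [show ((fderiv ℝ ℓ (sω (N-1) (ω k₀))).comp (fderiv ℝ (sω (N-1)) (ω k₀))) v
          = fderiv ℝ ℓ (sω (N-1) (ω k₀)) ((fderiv ℝ (sω (N-1)) (ω k₀)) v) from rfl]
      rw [← inner_gradient_eq ℓ (sω (N-1) (ω k₀)) ((fderiv ℝ (sω (N-1)) (ω k₀)) v)]
      rw [hbase (N-1)]
      rw [eq_neg_of_add_eq_zero_left hlamtop, inner_neg_left]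
      exact congrArg Neg.neg (hess_symm _ (hC2 (N-1) _) _ (lam (N-1)) _)
    · show ⟪lam 1, (fderiv ℝ
          (fun u => gradient (fun s' => Et 1 s' (θ 1) u (ω 1)) (sθ 1 (θ k₀)))
          (sθ 0 (θ k₀))) ((fderiv ℝ (sω 0) (ω k₀)) v)⟫ = 0
      rw [show sω 0 = fun _ => x from funext hsω0, fderiv_fun_const]
      simp
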